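/- arXiv:2107.02550 — 2 statements merged into one kernel-verified Lean document; each statement's English description precedes it below -/
import Mathlib

section
/- Let (W, b, ρ) be a radial neural network with L layers and widths vector n = (n₀, …, n_L), and let g = (Q₁, …, Q_{L−1}) ∈ O(n₁) × ⋯ × O(n_{L−1}). Then the radial neural network with transformed parameters g·(W, b) = ((Q_i W_i Q_{i−1}^{−1})_{i=1}^L, (Q_i b_i)_{i=1}^L) (where Q₀ = id and Q_L = id) and the same activations ρ has the same feedforward function as (W, b, ρ). -/
open scoped Classical
open Metric Set

noncomputable section

abbrev Euc (n : ℕ) := EuclideanSpace ℝ (Fin n)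

def mulVecE {m n : ℕ} (W : Matrix (Fin m) (Fin n) ℝ) (v : Euc n) : Euc m :=
  WithLp.toLp 2 (fun j => ∑ k, W j k * v k)

/-- The radial rescaling function h⁽ᵏ⁾ : ℝᵏ → ℝᵏ associated to h : ℝ → ℝ,
v ↦ (h ‖v‖ / ‖v‖) • v for v ≠ 0, and 0 ↦ 0. -/
def radialRescale {n : ℕ} (h : ℝ → ℝ) (v : Euc n) : Euc n :=
  if v = 0 then 0 else (h ‖v‖ / ‖v‖) • v

/-- The partial feedforward functions of a fully connected network with widths
width 0, width 1, …: F₀ = id and F_{i+1}(x) = ρᵢ(Wᵢ Fᵢ(x) + bᵢ).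
(Activation ρ i, weights W i and biases b i belong to layer i+1.) -/
def feedforward (width : ℕ → ℕ)
    (W : ∀ i : ℕ, Matrix (Fin (width (i+1))) (Fin (width i)) ℝ)
    (b : ∀ i : ℕ, Euc (width (i+1)))
    (ρ : ∀ i : ℕ, Euc (width (i+1)) → Euc (width (i+1))) :
    (i : ℕ) → Euc (width 0) → Euc (width i)
  | 0 => fun x => x
  | (i+1) => fun x => ρ i (mulVecE (W i) (feedforward width W b ρ i x) + b i)

lemma mulVecE_eq {m n : ℕ} (W : Matrix (Fin m) (Fin n) ℝ) (v : Euc n) :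
    mulVecE W v = W.mulVec v := rfl

lemma mulVecE_mulVecE {m n p : ℕ} (A : Matrix (Fin m) (Fin n) ℝ)
    (B : Matrix (Fin n) (Fin p) ℝ) (v : Euc p) :
    mulVecE A (mulVecE B v) = mulVecE (A * B) v := by
  apply WithLp.ofLp_injective
  show A.mulVec (B.mulVec v) = (A * B).mulVec v
  rw [Matrix.mulVec_mulVec]

lemma mulVecE_one {n : ℕ} (v : Euc n) : mulVecE (1 : Matrix (Fin n) (Fin n) ℝ) v = v := by
  apply WithLp.ofLp_injective
  show (1 : Matrix (Fin n) (Fin n) ℝ).mulVec v = v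
  rw [Matrix.one_mulVec]

lemma mulVecE_add {m n : ℕ} (A : Matrix (Fin m) (Fin n) ℝ) (u v : Euc n) :
    mulVecE A (u + v) = mulVecE A u + mulVecE A v := by
  apply WithLp.ofLp_injective
  show A.mulVec (u + v) = A.mulVec u + A.mulVec v
  rw [Matrix.mulVec_add]

lemma mulVecE_smul {m n : ℕ} (A : Matrix (Fin m) (Fin n) ℝ) (c : ℝ) (v : Euc n) :
    mulVecE A (c • v) = c • mulVecE A v := by
  apply WithLp.ofLp_injective
  show A.mulVec (c • (v : Fin n → ℝ)) = c • A.mulVec v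
  rw [Matrix.mulVec_smul]

lemma norm_mulVecE {n : ℕ} {Q : Matrix (Fin n) (Fin n) ℝ}
    (hQ : Q ∈ Matrix.orthogonalGroup (Fin n) ℝ) (v : Euc n) :
    ‖mulVecE Q v‖ = ‖v‖ := by
  have hQ' : star Q * Q = 1 := (Matrix.mem_orthogonalGroup_iff' _ _).mp hQ
  rw [EuclideanSpace.norm_eq, EuclideanSpace.norm_eq]
  congr 1
  have h1 : ∑ i, ‖mulVecE Q v i‖ ^ 2
      = dotProduct (Q.mulVec v) (Q.mulVec v) := by
    simp [dotProduct, mulVecE_eq, sq, Real.norm_eq_abs, abs_mul_abs_self]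
  have h2 : dotProduct (Q.mulVec v) (Q.mulVec v)
      = dotProduct (fun j => v j) (fun j => v j) := by
    rw [Matrix.dotProduct_mulVec, ← Matrix.mulVec_transpose, Matrix.mulVec_mulVec]
    have hT : Q.transpose * Q = 1 := by simpa [Matrix.star_eq_conjTranspose] using hQ'
    rw [hT, Matrix.one_mulVec]
  rw [h1, h2]
  simp [dotProduct, sq, Real.norm_eq_abs, abs_mul_abs_self]

lemma mulVecE_eq_zero_iff {n : ℕ} {Q : Matrix (Fin n) (Fin n) ℝ}
    (hQ : Q ∈ Matrix.orthogonalGroup (Fin n) ℝ) (v : Euc n) :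
    mulVecE Q v = 0 ↔ v = 0 := by
  rw [← norm_eq_zero (E := Euc n), ← norm_eq_zero (E := Euc n) (a := v), norm_mulVecE hQ]

lemma radialRescale_mulVecE {n : ℕ} {Q : Matrix (Fin n) (Fin n) ℝ}
    (hQ : Q ∈ Matrix.orthogonalGroup (Fin n) ℝ) (h : ℝ → ℝ) (v : Euc n) :
    radialRescale h (mulVecE Q v) = mulVecE Q (radialRescale h v) := by
  unfold radialRescale
  by_cases hv : v = 0
  · simp [hv, mulVecE_eq_zero_iff hQ, show mulVecE Q 0 = 0 from by
      simpa using mulVecE_smul Q 0 0]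
  · rw [if_neg hv, if_neg ((not_iff_not.mpr (mulVecE_eq_zero_iff hQ v)).mpr hv),
      norm_mulVecE hQ, mulVecE_smul]

/-- Let (W, b, ρ) be a radial neural network with L layers and widths
n₀, …, n_L, with activations ρᵢ = hᵢ^{(nᵢ)}, and let Q = (Q₀, …, Q_L) be orthogonal
matrices with Q₀ = 1 and Q_L = 1.  Then the network with transformed parameters
Wᵢ ↦ Qᵢ Wᵢ Qᵢ₋₁⁻¹, bᵢ ↦ Qᵢ bᵢ and the same activations has the same feedforward
function. -/
theorem feedforward_orthogonal_invariance (L : ℕ) (width : ℕ → ℕ)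
    (W : ∀ i : ℕ, Matrix (Fin (width (i+1))) (Fin (width i)) ℝ)
    (b : ∀ i : ℕ, Euc (width (i+1)))
    (h : ℕ → ℝ → ℝ)
    (Q : ∀ i : ℕ, Matrix (Fin (width i)) (Fin (width i)) ℝ)
    (hQ : ∀ i, Q i ∈ Matrix.orthogonalGroup (Fin (width i)) ℝ)
    (hQ0 : Q 0 = 1) (hQL : Q L = 1) (x : Euc (width 0)) :
    feedforward width (fun i => Q (i+1) * W i * (Q i)⁻¹)
        (fun i => mulVecE (Q (i+1)) (b i))
        (fun i => radialRescale (h i)) L x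
      = feedforward width W b (fun i => radialRescale (h i)) L x := by
  have key : ∀ i : ℕ,
      feedforward width (fun i => Q (i+1) * W i * (Q i)⁻¹)
        (fun i => mulVecE (Q (i+1)) (b i))
        (fun i => radialRescale (h i)) i x
      = mulVecE (Q i) (feedforward width W b (fun i => radialRescale (h i)) i x) := by
    intro i
    induction i with
    | zero => simp [feedforward, hQ0, mulVecE_one]
    | succ i ih =>
      have h1 : Q i * star (Q i) = 1 := (Matrix.mem_orthogonalGroup_iff _ _).mp (hQ i)
      have hinv : (Q i)⁻¹ * Q i = 1 := by
        rw [Matrix.inv_eq_right_inv h1]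
        exact (Matrix.mem_orthogonalGroup_iff' _ _).mp (hQ i)
      show radialRescale (h i) _ = mulVecE (Q (i+1)) (radialRescale (h i) _)
      rw [ih, mulVecE_mulVecE, ← radialRescale_mulVecE (hQ (i+1)), mulVecE_add,
        mulVecE_mulVecE]
      rw [Matrix.mul_assoc (Q (i+1) * W i), hinv, Matrix.mul_one]
  rw [key L, hQL, mulVecE_one]

end
end

section
/- Let (W, b, t, h) be a radial neural network with shifts, with L layers, widths vector n = (n₀, …, n_L), shifts t = (t₁, …, t_L) ∈ ℝ^L, and activations ρ_i = h_i^{(n_i, t_i)}. Let n^red be the reduced widths vector of n. Then there exist weights W^red_i ∈ ℝ^{n^red_i × n^red_{i−1}} and biases b^red_i ∈ ℝ^{n^red_i} (i = 1, …, L) such that the feedforward function of the compressed network (W^red, b^red, t, h), with the same shifts t and activations h_i^{(n^red_i, t_i)}, equals the feedforward function of (W, b, t, h). -/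
open scoped Classical
open Metric Set

noncomputable section

/-- The reduced widths vector: nʳᵉᵈ₀ = n₀, nʳᵉᵈᵢ = min(nᵢ, nʳᵉᵈ_{i−1} + 1) for
0 < i < L, and nʳᵉᵈ_L = n_L. -/
def reducedWidth (width : ℕ → ℕ) (L : ℕ) : ℕ → ℕ
  | 0 => width 0
  | (i+1) => if i + 1 < L then min (width (i+1)) (reducedWidth width L i + 1) else width (i+1)

lemma reducedWidth_le (width : ℕ → ℕ) (L : ℕ) (i : ℕ) :
    reducedWidth width L i ≤ width i := by
  cases i with
  | zero => simp [reducedWidth]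
  | succ i =>
    rw [reducedWidth]
    split
    · exact min_le_left _ _
    · exact le_rfl

/-- The standard inclusion ℝᵏ ↪ ℝˡ into the first k coordinates. -/
def incl (k l : ℕ) (v : Euc k) : Euc l :=
  WithLp.toLp 2 (fun j => if h : (j : ℕ) < k then v ⟨j, h⟩ else 0)

/-- The shifted radial rescaling function h^{(k,t)} : ℝᵏ → ℝᵏ,
v ↦ (h (‖v‖ − t) / ‖v‖) • v for v ≠ 0, and 0 ↦ 0. -/
def shiftedRadialRescale {n : ℕ} (h : ℝ → ℝ) (t : ℝ) (v : Euc n) : Euc n :=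
  if v = 0 then 0 else (h (‖v‖ - t) / ‖v‖) • v

lemma incl_self (k : ℕ) (v : Euc k) : incl k k v = v := by
  ext j
  simp [incl]

lemma incl_incl {r k m : ℕ} (hrk : r ≤ k) (y : Euc r) :
    incl k m (incl r k y) = incl r m y := by
  ext j
  unfold incl
  simp only [PiLp.toLp_apply]
  by_cases h1 : (j : ℕ) < r
  · rw [dif_pos (lt_of_lt_of_le h1 hrk), dif_pos h1]
  · rw [dif_neg h1]
    by_cases h2 : (j : ℕ) < k
    · rw [dif_pos h2, dif_neg h1]
    · rw [dif_neg h2]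

def inclLM (k m : ℕ) : Euc k →ₗ[ℝ] Euc m where
  toFun := incl k m
  map_add' u v := by
    ext j
    simp only [incl, PiLp.add_apply]
    split_ifs <;> simp
  map_smul' c v := by
    ext j
    simp only [incl, PiLp.smul_apply, RingHom.id_apply, smul_eq_mul]
    split_ifs <;> simp

lemma sum_incl_reindex {M : Type*} [AddCommMonoid M] {k m : ℕ} (h : k ≤ m)
    (f : Fin m → M) (hf : ∀ j : Fin m, k ≤ (j : ℕ) → f j = 0) :
    ∑ j : Fin m, f j = ∑ j : Fin k, f (Fin.castLE h j) := by
  have h2 : ∑ j : Fin k, f (Fin.castLE h j)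
      = ∑ j ∈ Finset.univ.map (Fin.castLEEmb h), f j := by
    rw [Finset.sum_map]; rfl
  rw [h2]
  symm
  apply Finset.sum_subset (Finset.subset_univ _)
  intro j _ hj
  apply hf
  by_contra hc
  exact hj (Finset.mem_map.2 ⟨⟨(j : ℕ), by omega⟩, Finset.mem_univ _, rfl⟩)

def inclLI (k m : ℕ) (h : k ≤ m) : Euc k →ₗᵢ[ℝ] Euc m :=
  (inclLM k m).isometryOfInner (by
    intro x y
    simp only [inclLM, LinearMap.coe_mk, AddHom.coe_mk]
    rw [PiLp.inner_apply, PiLp.inner_apply]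
    rw [sum_incl_reindex h (fun j => inner ℝ (incl k m x j) (incl k m y j))
      (fun j hj => by simp [incl, Nat.not_lt.2 hj])]
    refine Finset.sum_congr rfl fun j _ => ?_
    simp [incl])

@[simp] lemma inclLI_apply {k m : ℕ} (h : k ≤ m) (v : Euc k) :
    inclLI k m h v = incl k m v := rfl

lemma shiftedRadialRescale_comm {k m : ℕ} (f : Euc k →ₗᵢ[ℝ] Euc m)
    (h : ℝ → ℝ) (t : ℝ) (v : Euc k) :
    shiftedRadialRescale h t (f v) = f (shiftedRadialRescale h t v) := by
  by_cases hv : v = 0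
  · subst hv; simp [shiftedRadialRescale]
  · have hfv : f v ≠ 0 := fun hh => hv (f.injective (by simp [hh]))
    simp [shiftedRadialRescale, hv, hfv, f.norm_map, map_smul]

def mulVecLM {m n : ℕ} (W : Matrix (Fin m) (Fin n) ℝ) : Euc n →ₗ[ℝ] Euc m where
  toFun := mulVecE W
  map_add' u v := by
    ext j
    simp [mulVecE, mul_add, Finset.sum_add_distrib]
  map_smul' c v := by
    ext j
    simp [mulVecE, Finset.mul_sum]
    ring_nf
    simp [mul_comm, mul_left_comm]

lemma euc_sum_apply {n : ℕ} {ι : Type*} (s : Finset ι) (f : ι → Euc n) (j : Fin n) :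
    (∑ x ∈ s, f x) j = ∑ x ∈ s, f x j :=
  by rw [WithLp.ofLp_sum]; exact Finset.sum_apply j s _

lemma exists_matrix {p k : ℕ} (B : Euc p →ₗ[ℝ] Euc k) :
    ∃ M : Matrix (Fin k) (Fin p) ℝ, ∀ v, mulVecE M v = B v := by
  refine ⟨fun j l => B (EuclideanSpace.single l 1) j, fun v => ?_⟩
  have hv : v = ∑ l, v l • EuclideanSpace.single l (1:ℝ) := by
    ext i
    rw [euc_sum_apply]
    simp [EuclideanSpace.single_apply, Finset.sum_ite_eq']
  ext j
  conv_rhs => rw [hv]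
  rw [map_sum, euc_sum_apply]
  simp [mulVecE, mul_comm]

lemma last_step {p m k : ℕ} (hkm : k = m) (A : Euc p →ₗ[ℝ] Euc m) (c : Euc m) :
    ∃ (B : Euc p →ₗ[ℝ] Euc k) (d : Euc k), ∀ v, A v + c = incl k m (B v + d) := by
  subst hkm
  exact ⟨A, c, fun v => (incl_self _ _).symm⟩

lemma key_step (p m k : ℕ) (hkm : k ≤ m) (hmin : min m (p+1) ≤ k)
    (A : Euc p →ₗ[ℝ] Euc m) (c : Euc m) :
    ∃ (J : Euc k →ₗᵢ[ℝ] Euc m) (B : Euc p →ₗ[ℝ] Euc k) (d : Euc k),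
      ∀ v, A v + c = J (B v + d) := by
  classical
  set S : Submodule ℝ (Euc m) := LinearMap.range A ⊔ (ℝ ∙ c) with hS
  have hAS : ∀ v, A v ∈ S := fun v => Submodule.mem_sup_left (LinearMap.mem_range_self A v)
  have hcS : c ∈ S := Submodule.mem_sup_right (Submodule.mem_span_singleton_self c)
  set r := Module.finrank ℝ S with hr
  have hrk : r ≤ k := by
    have h1 := Submodule.finrank_sup_add_finrank_inf_eq (LinearMap.range A) (ℝ ∙ c)
    have h2 : Module.finrank ℝ (LinearMap.range A) ≤ p := by
      simpa using LinearMap.finrank_range_le A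
    have h3 : Module.finrank ℝ (ℝ ∙ c) ≤ 1 := by
      by_cases hc : c = 0
      · rw [hc, Submodule.span_zero_singleton]; simp
      · simp [finrank_span_singleton hc]
    have h4 : Module.finrank ℝ ↥(LinearMap.range A ⊔ (ℝ ∙ c)) ≤ m := by
      simpa using (LinearMap.range A ⊔ (ℝ ∙ c)).finrank_le
    rw [hr, hS]
    omega
  have hrm : r ≤ m := le_trans hrk hkm
  set o := stdOrthonormalBasis ℝ S with ho
  set vfam : Fin m → Euc m :=
    fun i => if h : (i : ℕ) < r then ((o ⟨(i : ℕ), h⟩ : S) : Euc m) else 0 with hvfam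
  have hon : Orthonormal ℝ (Set.restrict {i : Fin m | (i : ℕ) < r} vfam) := by
    rw [orthonormal_iff_ite]
    rintro ⟨i, hi⟩ ⟨j, hj⟩
    have hi' : (i : ℕ) < r := hi
    have hj' : (j : ℕ) < r := hj
    show inner ℝ (vfam i) (vfam j) = _
    simp only [hvfam]
    rw [dif_pos hi', dif_pos hj', ← Submodule.coe_inner,
      orthonormal_iff_ite.mp o.orthonormal]
    by_cases hij : i = j
    · subst hij; simp
    · have h1' : (⟨(i : ℕ), hi'⟩ : Fin r) ≠ ⟨(j : ℕ), hj'⟩ := by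
        intro hc
        rw [Fin.mk.injEq] at hc
        exact hij (Fin.ext hc)
      have h2' : (⟨i, hi⟩ : {i : Fin m | (i : ℕ) < r}) ≠ ⟨j, hj⟩ :=
        fun hc => hij (congrArg Subtype.val hc)
      rw [if_neg h1', if_neg h2']
  obtain ⟨bb, hbb⟩ := hon.exists_orthonormalBasis_extension_of_card_eq (by simp)
  have hb_eq : ∀ j : Fin r, bb (Fin.castLE hrm j) = ((o j : S) : Euc m) := by
    intro j
    have hmem : (Fin.castLE hrm j : Fin m) ∈ {i : Fin m | (i : ℕ) < r} := j.isLt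
    rw [hbb _ hmem, hvfam]
    simp
  have hcoord : ∀ s : S, bb.repr (s : Euc m) = incl r m (o.repr s) := by
    intro s
    ext i
    have hsum : (s : Euc m) = ∑ j : Fin r, o.repr s j • bb (Fin.castLE hrm j) := by
      conv_lhs => rw [← o.sum_repr s]
      rw [Submodule.coe_sum]
      exact Finset.sum_congr rfl fun j _ => by rw [hb_eq]; rfl
    rw [OrthonormalBasis.repr_apply_apply, hsum, inner_sum]
    simp_rw [real_inner_smul_right, orthonormal_iff_ite.mp bb.orthonormal]
    by_cases hi : (i : ℕ) < r
    · rw [Finset.sum_eq_single (⟨(i : ℕ), hi⟩ : Fin r)]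
      · rw [if_pos (by ext; rfl)]
        simp [incl, hi]
      · intro j _ hj
        rw [if_neg, mul_zero]
        intro hc
        exact hj (by ext; exact (congrArg Fin.val hc).symm)
      · intro hc; exact absurd (Finset.mem_univ _) hc
    · rw [Finset.sum_eq_zero, incl, PiLp.toLp_apply, dif_neg hi]
      intro j _
      rw [if_neg, mul_zero]
      intro hc
      exact hi (hc ▸ j.isLt)
  have incl_add : ∀ (x y : Euc r), incl r k (x + y) = incl r k x + incl r k y :=
    fun x y => map_add (inclLM r k) x y
  refine ⟨(bb.repr.symm.toLinearIsometry).comp (inclLI k m hkm),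
    (inclLM r k).comp ((o.repr.toLinearEquiv.toLinearMap).comp (A.codRestrict S hAS)),
    incl r k (o.repr ⟨c, hcS⟩), fun v => ?_⟩
  have hs : (⟨A v + c, S.add_mem (hAS v) hcS⟩ : S)
      = A.codRestrict S hAS v + ⟨c, hcS⟩ := rfl
  simp only [LinearIsometry.coe_comp, Function.comp_apply, LinearMap.coe_comp,
    LinearIsometryEquiv.coe_toLinearIsometry, inclLI_apply]
  have hBd : (inclLM r k) ((o.repr.toLinearEquiv.toLinearMap) ((A.codRestrict S hAS) v))
        + incl r k (o.repr ⟨c, hcS⟩)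
      = incl r k (o.repr (⟨A v + c, S.add_mem (hAS v) hcS⟩ : S)) := by
    rw [hs, map_add o.repr, incl_add]
    rfl
  rw [hBd, incl_incl hrk, ← hcoord, LinearIsometryEquiv.symm_apply_apply]


/-- **model compression with shifts.** Let (W, b, t, h) be a radial neural
network with shifts, with L layers, widths n₀, …, n_L and activations hᵢ^{(nᵢ, tᵢ)}.
Then there exist reduced weights and biases such that the compressed network with the
same shifts and activations hᵢ^{(nʳᵉᵈᵢ, tᵢ)} has the same feedforward function
(nʳᵉᵈ_L = n_L, and the identification of ℝ^{nʳᵉᵈ_L} with ℝ^{n_L} is the standard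
inclusion). -/
theorem model_compression_with_shifts (L : ℕ) (width : ℕ → ℕ)
    (W : ∀ i : ℕ, Matrix (Fin (width (i+1))) (Fin (width i)) ℝ)
    (b : ∀ i : ℕ, Euc (width (i+1)))
    (t : ℕ → ℝ) (h : ℕ → ℝ → ℝ) :
    ∃ (Wred : ∀ i : ℕ, Matrix (Fin (reducedWidth width L (i+1))) (Fin (reducedWidth width L i)) ℝ)
      (bred : ∀ i : ℕ, Euc (reducedWidth width L (i+1))),
      ∀ x : Euc (width 0),
        feedforward width W b (fun i => shiftedRadialRescale (h i) (t i)) L x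
          = incl (reducedWidth width L L) (width L)
              (feedforward (reducedWidth width L) Wred bred
                (fun i => shiftedRadialRescale (h i) (t i)) L x) := by
  classical
  have step : ∀ (i : ℕ) (J : Euc (reducedWidth width L i) →ₗᵢ[ℝ] Euc (width i)),
      ∃ (J' : Euc (reducedWidth width L (i+1)) →ₗᵢ[ℝ] Euc (width (i+1)))
        (Bm : Matrix (Fin (reducedWidth width L (i+1))) (Fin (reducedWidth width L i)) ℝ)
        (d : Euc (reducedWidth width L (i+1))),
        (∀ v, mulVecE (W i) (J v) + b i = J' (mulVecE Bm v + d)) ∧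
        (L ≤ i + 1 → ∀ v, J' v = incl (reducedWidth width L (i+1)) (width (i+1)) v) := by
    intro i J
    by_cases hi : i + 1 < L
    · have hred : reducedWidth width L (i+1)
          = min (width (i+1)) (reducedWidth width L i + 1) := by
        rw [reducedWidth, if_pos hi]
      obtain ⟨J', B, d, hJ⟩ := key_step (reducedWidth width L i) (width (i+1))
        (reducedWidth width L (i+1)) (reducedWidth_le width L (i+1)) (le_of_eq hred.symm)
        ((mulVecLM (W i)).comp J.toLinearMap) (b i)
      obtain ⟨M, hM⟩ := exists_matrix B
      refine ⟨J', M, d, fun v => ?_, fun hL => absurd hi (by omega)⟩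
      rw [hM]
      exact hJ v
    · have hred : reducedWidth width L (i+1) = width (i+1) := by
        rw [reducedWidth, if_neg hi]
      obtain ⟨B, d, hB⟩ := last_step hred ((mulVecLM (W i)).comp J.toLinearMap) (b i)
      obtain ⟨M, hM⟩ := exists_matrix B
      refine ⟨inclLI _ _ (le_of_eq hred), M, d, fun v => ?_, fun _ v => rfl⟩
      rw [hM, inclLI_apply]
      exact hB v
  let G : ∀ i, Euc (reducedWidth width L i) →ₗᵢ[ℝ] Euc (width i) :=
    fun i => Nat.rec (inclLI (width 0) (width 0) le_rfl) (fun i Ji => (step i Ji).choose) i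
  refine ⟨fun i => (step i (G i)).choose_spec.choose,
    fun i => (step i (G i)).choose_spec.choose_spec.choose, fun x => ?_⟩
  have inv : ∀ i, feedforward width W b (fun i => shiftedRadialRescale (h i) (t i)) i x
      = G i (feedforward (reducedWidth width L)
          (fun i => (step i (G i)).choose_spec.choose)
          (fun i => (step i (G i)).choose_spec.choose_spec.choose)
          (fun i => shiftedRadialRescale (h i) (t i)) i x) := by
    intro i
    induction i with
    | zero =>
      show x = G 0 x
      exact (incl_self (width 0) x).symm
    | succ i ih =>
      have hspec := (step i (G i)).choose_spec.choose_spec.choose_spec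
      have hG : G (i+1) = (step i (G i)).choose := rfl
      simp only [feedforward]
      rw [ih, hspec.1, hG]
      exact shiftedRadialRescale_comm _ _ _ _
  rw [inv L]
  cases L with
  | zero => rfl
  | succ i =>
    exact ((step i (G i)).choose_spec.choose_spec.choose_spec).2 le_rfl _


end
end
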